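/- The rational map φ(z) = (120 - 60z + 12z² - z³)/(120 + 60z + 12z² + z³) maps the open right half of the complex plane into the open unit disk: if Re(z) > 0 then |φ(z)| < 1. -/

import Mathlib

open Complex

/-- The `[3,3]` Padé approximant `φ(z) = (120 - 60z + 12z² - z³)/(120 + 60z + 12z² + z³)`
of `e^{-z}` maps the open right half-plane into the open unit disk. -/
theorem pade33_maps_right_halfplane_to_unit_disk (z : ℂ) (hz : 0 < z.re) :
    ‖(120 - 60 * z + 12 * z ^ 2 - z ^ 3) /
      (120 + 60 * z + 12 * z ^ 2 + z ^ 3)‖ < 1 := by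
  set N := 120 - 60 * z + 12 * z ^ 2 - z ^ 3 with hN
  set D := 120 + 60 * z + 12 * z ^ 2 + z ^ 3 with hD
  have key : normSq D - normSq N =
      48 * z.re * (600 + 70 * z.re ^ 2 + z.re ^ 4 + 30 * z.im ^ 2 +
        2 * z.re ^ 2 * z.im ^ 2 + z.im ^ 4) := by
    simp only [hN, hD, Complex.normSq_apply, Complex.add_re, Complex.add_im,
      Complex.sub_re, Complex.sub_im, Complex.mul_re, Complex.mul_im,
      Complex.re_ofNat, Complex.im_ofNat, pow_succ, pow_zero, one_mul,
      Complex.one_re, Complex.one_im]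
    ring
  have hpos : 0 < normSq D - normSq N := by
    rw [key]; positivity
  have hlt : normSq N < normSq D := by linarith
  have hDne : D ≠ 0 := by
    rw [← Complex.normSq_pos]
    have := Complex.normSq_nonneg N
    linarith
  rw [norm_div, div_lt_one (norm_pos_iff.mpr hDne)]
  rw [Complex.norm_def, Complex.norm_def]
  exact Real.sqrt_lt_sqrt (Complex.normSq_nonneg N) hlt
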